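/- Let L and L′ be 𝒪_F-lattice chains in V. Then 𝔄(L) = 𝔄(L′) if and only if there exists an integer k ∈ ℤ such that L′(i) = L(i+k) for all i ∈ ℤ. In particular, a hereditary order determines the lattice chain defining it up to translation of the indexing. -/

import Mathlib

/-!
Context: `F` is a nonarchimedean local field, modelled as a field together with a
valuation subring `OF` which is a discrete valuation ring with finite residue field,
with a fixed uniformizer `ϖF` (an irreducible element of `OF`).  `V` is a nonzero
finite-dimensional `F`-vector space, `A = End_F V` and `G = GL_F(V) = (End_F V)ˣ`.
-/

noncomputable section

variable {F : Type*} [Field F] {V : Type*} [AddCommGroup V] [Module F V]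

/-- A subring of `F` acts on any `F`-vector space by restriction of scalars. -/
instance (priority := 100) ValuationSubring.instModuleOfModule (O : ValuationSubring F) :
    Module O V :=
  Module.compHom V O.subtype

/-- `L : ℤ → Submodule 𝒪 V` is an `𝒪`-lattice chain of period `e` : each `L i` is a
finitely generated `𝒪`-submodule spanning `V` over `F` (an `𝒪`-lattice), the chain is
strictly decreasing, and `ϖ • L i = L (i + e)` for all `i`. -/
structure IsLatticeChain (O : ValuationSubring F) (ϖ : O) (L : ℤ → Submodule O V) (e : ℕ) :
    Prop where
  period_pos : 0 < e
  fg : ∀ i, (L i).FG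
  spans : ∀ i, Submodule.span F ((L i : Set V)) = ⊤
  strict : ∀ i, L (i + 1) < L i
  smul_eq : ∀ (i : ℤ) (x : V), x ∈ L (i + e) ↔ ∃ y ∈ L i, x = (ϖ : F) • y

/-- The hereditary order `𝔄(L) = {a ∈ End_F V : a (L i) ⊆ L i for all i}`. -/
def hereditaryOrder (O : ValuationSubring F) (L : ℤ → Submodule O V) :
    Subring (Module.End F V) where
  carrier := {a | ∀ i, ∀ x ∈ L i, a x ∈ L i}
  zero_mem' := fun i x _ => by simpa using (L i).zero_mem
  one_mem' := fun i x hx => by simpa using hx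
  add_mem' := fun {a b} ha hb i x hx => by
    simpa using (L i).add_mem (ha i x hx) (hb i x hx)
  neg_mem' := fun {a} ha i x hx => by simpa using (L i).neg_mem (ha i x hx)
  mul_mem' := fun {a b} ha hb i x hx => by
    simpa [Module.End.mul_apply] using ha i _ (hb i x hx)

lemma mem_hereditaryOrder {O : ValuationSubring F} {L : ℤ → Submodule O V}
    {a : Module.End F V} :
    a ∈ hereditaryOrder O L ↔ ∀ i, ∀ x ∈ L i, a x ∈ L i := Iff.rfl

/-- The radical `𝔓(L) = {a ∈ End_F V : a (L i) ⊆ L (i+1) for all i}`, as a set. -/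
def radicalSet (O : ValuationSubring F) (L : ℤ → Submodule O V) :
    Set (Module.End F V) :=
  {a | ∀ i, ∀ x ∈ L i, a x ∈ L (i + 1)}

/-- The unit group `U(𝔄(L)) = 𝔄(L)ˣ` of the hereditary order, as a set of
endomorphisms: the elements of `𝔄(L)` invertible in `𝔄(L)`. -/
def orderUnits (O : ValuationSubring F) (L : ℤ → Submodule O V) :
    Set (Module.End F V) :=
  {a | a ∈ hereditaryOrder O L ∧ ∃ b ∈ hereditaryOrder O L, a * b = 1 ∧ b * a = 1}

/-- The unit group `U(𝔄(L)) = 𝔄(L)ˣ`, as a subgroup of `G = GL_F(V)`. -/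
def unitGroup (O : ValuationSubring F) (L : ℤ → Submodule O V) :
    Subgroup (Module.End F V)ˣ where
  carrier := {u | ↑u ∈ hereditaryOrder O L ∧ ↑u⁻¹ ∈ hereditaryOrder O L}
  one_mem' := ⟨one_mem _, by simpa using one_mem (hereditaryOrder O L)⟩
  mul_mem' := fun {a b} ha hb => ⟨mul_mem ha.1 hb.1, by
    rw [mul_inv_rev]; exact mul_mem hb.2 ha.2⟩
  inv_mem' := fun {a} ha => ⟨ha.2, by simpa using ha.1⟩

lemma mem_unitGroup {O : ValuationSubring F} {L : ℤ → Submodule O V}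
    {u : (Module.End F V)ˣ} :
    u ∈ unitGroup O L ↔
      (u : Module.End F V) ∈ hereditaryOrder O L ∧
        ((u⁻¹ : (Module.End F V)ˣ) : Module.End F V) ∈ hereditaryOrder O L := Iff.rfl

/-- Conjugation `g S g⁻¹` of a set of endomorphisms by an element `g ∈ GL_F(V)`. -/
def conjIm (g : (Module.End F V)ˣ) (S : Set (Module.End F V)) : Set (Module.End F V) :=
  (fun a => (g : Module.End F V) * a * ((g⁻¹ : (Module.End F V)ˣ) : Module.End F V)) '' S

lemma IsLatticeChain.antitone {O : ValuationSubring F} {ϖ : O} {L : ℤ → Submodule O V}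
    {e : ℕ} (hL : IsLatticeChain O ϖ L e) : Antitone L :=
  antitone_int_of_succ_le fun i => (hL.strict i).le

lemma IsLatticeChain.smul_mem_succ {O : ValuationSubring F} {ϖ : O} {L : ℤ → Submodule O V}
    {e : ℕ} (hL : IsLatticeChain O ϖ L e) (i : ℤ) {x : V} (hx : x ∈ L i) :
    (ϖ : F) • x ∈ L (i + 1) := by
  have h1 : (ϖ : F) • x ∈ L (i + e) := (hL.smul_eq i _).2 ⟨x, hx, rfl⟩
  have h2 : (i + 1 : ℤ) ≤ i + e := by have := hL.period_pos; omega
  exact hL.antitone h2 h1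


/-! ### Auxiliary lemmas -/

set_option synthInstance.maxHeartbeats 1000000
set_option maxHeartbeats 1000000

section Aux

variable {O : ValuationSubring F}

lemma vsmul_def (c : O) (v : V) : c • v = (c : F) • v := rfl

instance : IsScalarTower O F V :=
  ⟨fun c f v => by show ((c : F) * f) • v = (c : F) • f • v; rw [mul_smul]⟩

instance : NoZeroSMulDivisors O V :=
  ⟨fun {c v} h => by
    rw [vsmul_def] at h
    rcases smul_eq_zero.mp h with h | h
    · exact Or.inl (by exact_mod_cast h)
    · exact Or.inr h⟩

lemma smul_mem_of_mem {L : ℤ → Submodule O V} (c : O) {i : ℤ} {v : V} (hv : v ∈ L i) :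
    (c : F) • v ∈ L i := by
  rw [← vsmul_def]; exact (L i).smul_mem c hv

theorem exists_dual_one {v : V} (hv : v ≠ 0) :
    ∃ lam : V →ₗ[F] F, lam v = 1 := by
  have hli := LinearIndepOn.singleton (R := F) (v := (id : V → V)) hv
  have hsub : ({v} : Set V) ⊆ hli.extend (Set.subset_univ _) := hli.subset_extend _
  let b := Module.Basis.extend hli
  refine ⟨b.coord ⟨v, hsub rfl⟩, ?_⟩
  have hb : b ⟨v, hsub rfl⟩ = v := Module.Basis.extend_apply_self hli ⟨v, hsub rfl⟩
  have h2 := congrArg (b.coord ⟨v, hsub rfl⟩) hb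
  rw [← h2, Module.Basis.coord_apply, Module.Basis.repr_self, Finsupp.single_eq_same]

theorem exists_pow_mul_mem [IsDiscreteValuationRing O] {ϖ : O} (hϖ : Irreducible ϖ) (f : F) :
    ∃ (N : ℕ) (c : O), (ϖ : F) ^ N * f = (c : F) := by
  rcases eq_or_ne f 0 with rfl | hf
  · exact ⟨0, 0, by simp⟩
  rcases O.mem_or_inv_mem f with hmem | hmem
  · exact ⟨0, ⟨f, hmem⟩, by simp⟩
  · have hne : (⟨f⁻¹, hmem⟩ : O) ≠ 0 := by
      simp only [ne_eq, Subtype.ext_iff]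
      exact inv_ne_zero hf
    obtain ⟨n, u, hnu⟩ := IsDiscreteValuationRing.eq_unit_mul_pow_irreducible hne hϖ
    refine ⟨n, (u⁻¹ : Oˣ), ?_⟩
    have hcinv : f⁻¹ = ((u : O) : F) * (ϖ : F) ^ n := by
      have := congrArg (fun z : O => (z : F)) hnu
      simpa using this
    have h1 : ((((u⁻¹ : Oˣ) : O)) : F) * (((u : O)) : F) = 1 := by
      rw [← Subring.coe_mul]
      norm_cast
      rw [inv_mul_cancel]
      simp
    have h2 : (ϖ : F) ^ n * f * (((u : O)) : F) = 1 := by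
      calc (ϖ : F) ^ n * f * (((u : O)) : F) = f * ((((u : O)) : F) * (ϖ : F) ^ n) := by ring
      _ = f * f⁻¹ := by rw [← hcinv]
      _ = 1 := mul_inv_cancel₀ hf
    rw [eq_inv_of_mul_eq_one_left h2]
    exact (eq_inv_of_mul_eq_one_left h1).symm

theorem exists_good_functional [IsDiscreteValuationRing O] {ϖ : O} (hϖ : Irreducible ϖ)
    {M Mn : Submodule O V} (hfg : M.FG) (hspan : Submodule.span F (M : Set V) = ⊤)
    (hle : Mn ≤ M) (hsm : ∀ z ∈ M, (ϖ : F) • z ∈ Mn)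
    {x : V} (hx : x ∈ M) (hx' : x ∉ Mn) :
    ∃ lam : V →ₗ[F] F, lam x = 1 ∧ (∀ z ∈ M, ∃ c : O, lam z = (c : F)) ∧
      (∀ z ∈ Mn, ∃ c : O, lam z = (ϖ : F) * (c : F)) := by
  classical
  letI : Module.Finite O M := Module.Finite.iff_fg.mpr hfg
  let b : Module.Basis (Module.Free.ChooseBasisIndex O ↥M) O ↥M := Module.Free.chooseBasis O ↥M
  set ι := Module.Free.ChooseBasisIndex O ↥M with hι
  set v : ι → V := fun i => ((b i : ↥M) : V) with hv
  have hliO : LinearIndependent O v := b.linearIndependent.map' M.subtype (Submodule.ker_subtype M)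
  have hliF : LinearIndependent F v :=
    (LinearIndependent.iff_fractionRing (R := O) (K := F)).mp hliO
  have hspanv : ⊤ ≤ Submodule.span F (Set.range v) := by
    rw [← hspan]
    refine Submodule.span_le.mpr (fun z hz => ?_)
    have h1 : (⟨z, hz⟩ : ↥M) ∈ Submodule.span O (Set.range b) := Module.Basis.mem_span b _
    have h2 : z ∈ Submodule.map M.subtype (Submodule.span O (Set.range b)) :=
      ⟨⟨z, hz⟩, h1, rfl⟩
    rw [Submodule.map_span] at h2
    have h3 : M.subtype '' Set.range b = Set.range v := by
      ext w
      simp only [Set.mem_image, Set.mem_range, Submodule.coe_subtype, hv]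
      constructor
      · rintro ⟨_, ⟨i, rfl⟩, rfl⟩; exact ⟨i, rfl⟩
      · rintro ⟨i, rfl⟩; exact ⟨b i, ⟨i, rfl⟩, rfl⟩
    rw [h3] at h2
    exact Submodule.span_subset_span O F _ h2
  let bV : Module.Basis ι F V := Module.Basis.mk hliF hspanv
  set I : Ideal O := Ideal.span {ϖ} with hI
  haveI hImax : I.IsMaximal := by
    rw [hI, ← hϖ.maximalIdeal_eq]
    exact IsLocalRing.maximalIdeal.isMaximal _
  letI : Field (O ⧸ I) := Ideal.Quotient.field I
  set N : Submodule O ↥M := Mn.comap M.subtype with hN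
  have hTor : Module.IsTorsionBySet O (↥M ⧸ N) I := by
    rw [hI, ← Ideal.submodule_span_eq, Module.isTorsionBySet_span_singleton_iff]
    intro q
    obtain ⟨z, rfl⟩ := Submodule.Quotient.mk_surjective N q
    rw [← Submodule.Quotient.mk_smul, Submodule.Quotient.mk_eq_zero]
    exact Submodule.mem_comap.mpr (hsm _ z.2)
  letI : Module (O ⧸ I) (↥M ⧸ N) := hTor.module
  haveI : IsScalarTower O (O ⧸ I) (↥M ⧸ N) := hTor.isScalarTower
  have hxq : (Submodule.Quotient.mk ⟨x, hx⟩ : ↥M ⧸ N) ≠ 0 := by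
    rw [ne_eq, Submodule.Quotient.mk_eq_zero]
    exact fun h => hx' h
  obtain ⟨g, hg⟩ : ∃ g : (↥M ⧸ N) →ₗ[O ⧸ I] (O ⧸ I),
      g (Submodule.Quotient.mk ⟨x, hx⟩) = 1 := by
    have hli := LinearIndepOn.singleton (R := O ⧸ I) (v := (id : ↥M ⧸ N → ↥M ⧸ N)) hxq
    have hsub : ({Submodule.Quotient.mk ⟨x, hx⟩} : Set (↥M ⧸ N)) ⊆
        hli.extend (Set.subset_univ _) := hli.subset_extend _
    let bQ := Module.Basis.extend hli
    refine ⟨bQ.coord ⟨_, hsub rfl⟩, ?_⟩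
    have hb : bQ ⟨_, hsub rfl⟩ = Submodule.Quotient.mk ⟨x, hx⟩ :=
      Module.Basis.extend_apply_self hli ⟨_, hsub rfl⟩
    have h2 := congrArg (bQ.coord ⟨_, hsub rfl⟩) hb
    rw [← h2, Module.Basis.coord_apply, Module.Basis.repr_self, Finsupp.single_eq_same]
  let π : O →+* O ⧸ I := Ideal.Quotient.mk I
  let sec : O ⧸ I → O := Function.surjInv Ideal.Quotient.mk_surjective
  have hsec : ∀ c, π (sec c) = c := fun c =>
    Function.surjInv_eq Ideal.Quotient.mk_surjective c
  let μ : ↥M →ₗ[O] O := Module.Basis.constr b ℕ (fun i => sec (g (Submodule.Quotient.mk (b i))))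
  have hμπ : ∀ z : ↥M, π (μ z) = g (Submodule.Quotient.mk z) := by
    have map_eq : (Algebra.linearMap O (O ⧸ I)).comp μ =
        (g.restrictScalars O).comp ((N.mkQ).restrictScalars O) := by
      refine Module.Basis.ext b (fun i => ?_)
      simp only [LinearMap.comp_apply, Algebra.linearMap_apply, LinearMap.restrictScalars_apply,
        Submodule.mkQ_apply]
      rw [show μ (b i) = sec (g (Submodule.Quotient.mk (b i))) from Module.Basis.constr_basis b ℕ _ i]
      exact hsec _
    intro z
    have := congrArg (fun f : ↥M →ₗ[O] (O ⧸ I) => f z) map_eq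
    simpa using this
  have hπx : π (μ ⟨x, hx⟩) = 1 := by rw [hμπ]; exact hg
  have hunit : IsUnit (μ ⟨x, hx⟩) := by
    by_contra hnu
    have hmem : μ ⟨x, hx⟩ ∈ I := by
      rw [hI, ← hϖ.maximalIdeal_eq]
      exact (IsLocalRing.mem_maximalIdeal _).mpr hnu
    rw [Ideal.Quotient.eq_zero_iff_mem.mpr hmem] at hπx
    exact zero_ne_one hπx
  obtain ⟨u, hu⟩ := hunit
  let lam0 : V →ₗ[F] F := Module.Basis.constr bV ℕ (fun i => ((μ (b i) : O) : F))
  have hlam0 : ∀ (z : V) (hz : z ∈ M), lam0 z = ((μ ⟨z, hz⟩ : O) : F) := by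
    have map_eq2 : (lam0.restrictScalars O).comp M.subtype = (Algebra.linearMap O F).comp μ := by
      refine Module.Basis.ext b (fun i => ?_)
      simp only [LinearMap.comp_apply, LinearMap.restrictScalars_apply, Submodule.coe_subtype,
        Algebra.linearMap_apply]
      rw [show ((b i : ↥M) : V) = bV i from (Module.Basis.mk_apply hliF hspanv i).symm,
        Module.Basis.constr_basis]
      rfl
    intro z hz
    have := congrArg (fun f : ↥M →ₗ[O] F => f ⟨z, hz⟩) map_eq2
    simpa using this
  have huinv : ((((u⁻¹ : Oˣ) : O)) : F) * (((u : O)) : F) = 1 := by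
    rw [← Subring.coe_mul]
    norm_cast
    rw [inv_mul_cancel]
    simp
  refine ⟨(((u⁻¹ : Oˣ) : O) : F) • lam0, ?_, ?_, ?_⟩
  · rw [LinearMap.smul_apply, smul_eq_mul, hlam0 x hx, ← hu, huinv]
  · intro z hz
    refine ⟨(u⁻¹ : Oˣ) * μ ⟨z, hz⟩, ?_⟩
    rw [LinearMap.smul_apply, smul_eq_mul, hlam0 z hz]
    push_cast
    ring
  · intro z hz
    have hzM : z ∈ M := hle hz
    have hg0 : g (Submodule.Quotient.mk ⟨z, hzM⟩) = 0 := by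
      have : (Submodule.Quotient.mk ⟨z, hzM⟩ : ↥M ⧸ N) = 0 :=
        Submodule.Quotient.mk_eq_zero _ |>.mpr (Submodule.mem_comap.mpr hz)
      rw [this, map_zero]
    have hmem : μ ⟨z, hzM⟩ ∈ I := by
      rw [← Ideal.Quotient.eq_zero_iff_mem]
      rw [show (Ideal.Quotient.mk I) (μ ⟨z, hzM⟩) = π (μ ⟨z, hzM⟩) from rfl, hμπ]
      exact hg0
    obtain ⟨c, hc⟩ := Ideal.mem_span_singleton'.mp (hI ▸ hmem)
    refine ⟨(u⁻¹ : Oˣ) * c, ?_⟩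
    rw [LinearMap.smul_apply, smul_eq_mul, hlam0 z hzM, ← hc]
    push_cast
    ring

namespace IsLatticeChain

variable {ϖ : O} {L : ℤ → Submodule O V} {e : ℕ}

lemma strictAnti' (hL : IsLatticeChain O ϖ L e) : StrictAnti L :=
  strictAnti_int_of_succ_lt fun i => hL.strict i

lemma lt_iff (hL : IsLatticeChain O ϖ L e) {i j : ℤ} : L j < L i ↔ i < j :=
  hL.strictAnti'.lt_iff_gt

variable (hL : IsLatticeChain O ϖ L e)
include hL

lemma pow_smul_mem_iff (n : ℕ) (i : ℤ) (x : V) :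
    x ∈ L (i + n * e) ↔ ∃ y ∈ L i, x = ((ϖ : F) ^ n) • y := by
  induction n generalizing x with
  | zero => simp
  | succ n ih =>
    have h1 : i + ((n : ℤ) + 1) * e = (i + n * e) + e := by ring
    rw [show ((n + 1 : ℕ) : ℤ) = (n : ℤ) + 1 by push_cast; ring, h1, hL.smul_eq]
    constructor
    · rintro ⟨y, hy, rfl⟩
      obtain ⟨z, hz, rfl⟩ := (ih y).mp hy
      exact ⟨z, hz, by rw [← mul_smul, pow_succ, mul_comm]⟩
    · rintro ⟨z, hz, rfl⟩
      exact ⟨(ϖ : F) ^ n • z, (ih _).mpr ⟨z, hz, rfl⟩, by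
        rw [← mul_smul, pow_succ, mul_comm]⟩

omit hL in
lemma coe_ne_zero (hϖ : Irreducible ϖ) : (ϖ : F) ≠ 0 := by
  intro h
  exact hϖ.ne_zero (by exact_mod_cast h)

lemma mem_iff_pow_smul_mem (hϖ : Irreducible ϖ) (n : ℕ) (i : ℤ) (x : V) :
    x ∈ L i ↔ ((ϖ : F) ^ n) • x ∈ L (i + n * e) := by
  constructor
  · exact fun h => (hL.pow_smul_mem_iff n i _).mpr ⟨x, h, rfl⟩
  · intro h
    obtain ⟨y, hy, hxy⟩ := (hL.pow_smul_mem_iff n i _).mp h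
    exact (smul_right_injective V (pow_ne_zero n (coe_ne_zero hϖ)) hxy) ▸ hy

/-- every vector lies in some member of the chain -/
lemma exists_mem' [IsDiscreteValuationRing O] (hϖ : Irreducible ϖ) (v : V) : ∃ i, v ∈ L i := by
  classical
  set W : Submodule F V :=
    { carrier := ⋃ i, (L i : Set V)
      add_mem' := by
        rintro a b ⟨_, ⟨i, rfl⟩, ha⟩ ⟨_, ⟨j, rfl⟩, hb⟩
        refine Set.mem_iUnion.mpr ⟨min i j, (L _).add_mem ?_ ?_⟩
        · exact hL.antitone (min_le_left i j) ha
        · exact hL.antitone (min_le_right i j) hb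
      zero_mem' := Set.mem_iUnion.mpr ⟨0, (L 0).zero_mem⟩
      smul_mem' := by
        rintro c w ⟨_, ⟨i, rfl⟩, hw⟩
        rcases eq_or_ne c 0 with rfl | hc
        · exact Set.mem_iUnion.mpr ⟨i, by simpa using (L i).zero_mem⟩
        rcases O.mem_or_inv_mem c with hmem | hmem
        · exact Set.mem_iUnion.mpr ⟨i, smul_mem_of_mem ⟨c, hmem⟩ hw⟩
        · have hc' : (⟨c⁻¹, hmem⟩ : O) ≠ 0 := by
            simp only [ne_eq, Subtype.ext_iff]
            exact inv_ne_zero hc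
          obtain ⟨n, u, hnu⟩ := IsDiscreteValuationRing.eq_unit_mul_pow_irreducible hc' hϖ
          have hw' : w ∈ L ((i - n * e) + n * e) := by
            rw [sub_add_cancel]; exact hw
          obtain ⟨y, hy, rfl⟩ := (hL.pow_smul_mem_iff n (i - n * e) w).mp hw'
          refine Set.mem_iUnion.mpr ⟨i - n * e, ?_⟩
          have hcinv : c⁻¹ = ((u : O) : F) * (ϖ : F) ^ n := by
            have := congrArg (fun z : O => (z : F)) hnu
            simpa using this
          have hu0 : (((u : O)) : F) ≠ 0 := by
            simpa using (Units.ne_zero u)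
          have h1 : ((((u⁻¹ : Oˣ) : O)) : F) * (((u : O)) : F) = 1 := by
            rw [← Subring.coe_mul]
            norm_cast
            rw [inv_mul_cancel]
            simp
          have h2 : c * (ϖ : F) ^ n * (((u : O)) : F) = 1 := by
            calc c * (ϖ : F) ^ n * (((u : O)) : F) = c * ((((u : O)) : F) * (ϖ : F) ^ n) := by
                  ring
            _ = c * c⁻¹ := by rw [← hcinv]
            _ = 1 := mul_inv_cancel₀ hc
          have key : c * (ϖ : F) ^ n = (((u⁻¹ : Oˣ) : O) : F) := by
            rw [eq_inv_of_mul_eq_one_left h2] at *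
            exact (eq_inv_of_mul_eq_one_left h1).symm
          have : c • (ϖ : F) ^ n • y = (((u⁻¹ : Oˣ) : O) : F) • y := by
            rw [← mul_smul, key]
          rw [this]
          exact smul_mem_of_mem _ hy } with hW
  have hvW : v ∈ W := by
    have hle : Submodule.span F ((L 0 : Set V)) ≤ W :=
      Submodule.span_le.mpr (fun z hz => Set.mem_iUnion.mpr ⟨0, hz⟩)
    rw [hL.spans 0] at hle
    exact hle Submodule.mem_top
  obtain ⟨_, ⟨i, rfl⟩, hv⟩ := hvW
  exact ⟨i, hv⟩

/-- every nonzero vector is eventually not in the chain -/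
lemma exists_not_mem' [IsDiscreteValuationRing O] (hϖ : Irreducible ϖ) {v : V} (hv : v ≠ 0) :
    ∃ i, v ∉ L i := by
  classical
  obtain ⟨lam, hlam⟩ := exists_dual_one (F := F) hv
  obtain ⟨s, hs⟩ := hL.fg 0
  choose Nf cf hNf using (fun f : F => exists_pow_mul_mem (O := O) hϖ f)
  set N : ℕ := s.sup (fun z => Nf (lam z)) with hN
  have hbound : ∀ z ∈ L 0, ∃ c : O, (ϖ : F) ^ N * lam z = (c : F) := by
    intro z hz
    rw [← hs] at hz
    refine Submodule.span_induction ?_ ?_ ?_ ?_ hz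
    · intro x hx
      refine ⟨ϖ ^ (N - Nf (lam x)) * cf (lam x), ?_⟩
      have hle : Nf (lam x) ≤ N := Finset.le_sup (f := fun z => Nf (lam z)) hx
      push_cast
      rw [← hNf (lam x), ← mul_assoc, ← pow_add]
      congr 2
      omega
    · exact ⟨0, by simp⟩
    · rintro x y _ _ ⟨cx, hcx⟩ ⟨cy, hcy⟩
      exact ⟨cx + cy, by push_cast; rw [map_add, mul_add, hcx, hcy]⟩
    · rintro a x _ ⟨cx, hcx⟩
      refine ⟨a * cx, ?_⟩
      have : lam (a • x) = (a : F) * lam x := by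
        rw [show a • x = (a : F) • x from rfl, map_smul, smul_eq_mul]
      push_cast
      rw [this, ← hcx]
      ring
  refine ⟨(0 : ℤ) + (N + 1) * e, fun hv' => ?_⟩
  obtain ⟨y, hy, hvy⟩ := (hL.pow_smul_mem_iff (N + 1) 0 v).mp hv'
  have h1 : (ϖ : F) ^ (N + 1) * lam y = 1 := by
    rw [hvy] at hlam
    simpa [smul_eq_mul] using hlam
  obtain ⟨c, hc⟩ := hbound y hy
  have h2 : (ϖ : F) * (c : F) = 1 := by
    calc (ϖ : F) * c = (ϖ : F) * ((ϖ : F) ^ N * lam y) := by rw [hc]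
    _ = (ϖ : F) ^ (N + 1) * lam y := by ring
    _ = 1 := h1
  have h3 : (ϖ * c : O) = 1 := by exact_mod_cast h2
  exact hϖ.not_isUnit (IsUnit.of_mul_eq_one _ h3)

theorem exists_generator (hϖ : Irreducible ϖ)
    {j j' : ℤ} (hjj' : j ≤ j') {x y : V} (hx : x ∈ L j) (hx' : x ∉ L (j + 1))
    (hy : y ∈ L j')
    (lam : V →ₗ[F] F) (hlam1 : lam x = 1)
    (hlam2 : ∀ z ∈ L j, ∃ c : O, lam z = (c : F))
    (hlam3 : ∀ z ∈ L (j + 1), ∃ c : O, lam z = (ϖ : F) * (c : F)) :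
    ∃ a ∈ hereditaryOrder O L, a x = y := by
  refine ⟨lam.smulRight y, ?_, by simp [hlam1]⟩
  have main : ∀ m : ℤ, j ≤ m → ∀ z ∈ L m, lam z • y ∈ L m := by
    intro m hm z hz
    set q : ℤ := (m - j) / e with hq
    set r : ℤ := (m - j) % e with hr
    have he0 : (e : ℤ) ≠ 0 := by
      have := hL.period_pos; positivity
    have hdm : (e : ℤ) * q + r = m - j := Int.mul_ediv_add_emod _ _
    have hr0 : 0 ≤ r := Int.emod_nonneg _ he0
    have hre : r < e := Int.emod_lt_of_pos _ (by exact_mod_cast hL.period_pos)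
    have hq0 : 0 ≤ q := Int.ediv_nonneg (by omega) (by positivity)
    set n : ℕ := q.toNat with hn
    have hnq : (n : ℤ) = q := Int.toNat_of_nonneg hq0
    have hee : (n : ℤ) * e = e * q := by rw [hnq]; ring
    have hee2 : ((n : ℤ) + 1) * e = (n : ℤ) * e + e := by ring
    rcases eq_or_lt_of_le hr0 with hr0' | hrpos
    · have hm' : m = j + n * e := by omega
      rw [hm'] at hz ⊢
      obtain ⟨w, hw, rfl⟩ := (hL.pow_smul_mem_iff n j z).mp hz
      obtain ⟨c, hc⟩ := hlam2 w hw
      have : lam ((ϖ : F) ^ n • w) • y = (ϖ : F) ^ n • ((c : F) • y) := by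
        rw [map_smul, smul_eq_mul, hc, ← mul_smul]
      rw [this]
      have h1 : (ϖ : F) ^ n • ((c : F) • y) ∈ L (j' + n * e) :=
        (hL.pow_smul_mem_iff n j' _).mpr ⟨_, smul_mem_of_mem c hy, rfl⟩
      exact hL.antitone (by omega) h1
    · have hle2 : L m ≤ L ((j + 1) + n * e) := hL.antitone (by omega)
      obtain ⟨w, hw, rfl⟩ := (hL.pow_smul_mem_iff n (j + 1) z).mp (hle2 hz)
      obtain ⟨c, hc⟩ := hlam3 w hw
      have : lam ((ϖ : F) ^ n • w) • y = (ϖ : F) ^ (n + 1) • ((c : F) • y) := by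
        rw [map_smul, smul_eq_mul, hc, ← mul_smul, pow_succ]
        ring_nf
      rw [this]
      have h1 : (ϖ : F) ^ (n + 1) • ((c : F) • y) ∈ L (j' + (n + 1) * e) :=
        (hL.pow_smul_mem_iff (n + 1) j' _).mpr ⟨_, smul_mem_of_mem c hy, rfl⟩
      refine hL.antitone ?_ h1
      push_cast
      omega
  intro m z hz
  set Nt : ℕ := (j - m).toNat with hNt
  have hge : j ≤ m + Nt * e := by
    have h1 : (j - m : ℤ) ≤ (Nt : ℤ) := Int.self_le_toNat _
    have h2 : (Nt : ℤ) ≤ (Nt : ℤ) * e := by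
      have := hL.period_pos
      nlinarith [Int.ofNat_nonneg Nt]
    omega
  have hz' : (ϖ : F) ^ Nt • z ∈ L (m + Nt * e) :=
    (hL.mem_iff_pow_smul_mem hϖ Nt m z).mp hz
  have h2 := main _ hge _ hz'
  rw [map_smul, smul_eq_mul, mul_smul] at h2
  have h3 : lam z • y ∈ L m := by
    rw [hL.mem_iff_pow_smul_mem hϖ Nt m]
    convert h2 using 2
  exact h3

/-- classification of lattices stable under the hereditary order -/
theorem eq_of_stable [Nontrivial V] [IsDiscreteValuationRing O] (hϖ : Irreducible ϖ)
    {M : Submodule O V} (hfg : M.FG) (hspan : Submodule.span F (M : Set V) = ⊤)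
    (hstab : ∀ a ∈ hereditaryOrder O L, ∀ z ∈ M, a z ∈ M) :
    ∃ i, M = L i := by
  classical
  have hMbot : M ≠ ⊥ := by
    intro h
    rw [h, Submodule.bot_coe, Submodule.span_zero_singleton] at hspan
    exact absurd hspan bot_ne_top
  obtain ⟨v0, hv0M, hv0⟩ := (Submodule.ne_bot_iff M).mp hMbot
  obtain ⟨i1, hi1⟩ := hL.exists_not_mem' hϖ hv0
  have hbdd : ∀ z : ℤ, M ≤ L z → z ≤ i1 := by
    intro z hz
    by_contra hc
    exact hi1 (hL.antitone (le_of_not_ge hc) (hz hv0M))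
  have hinh : ∃ z : ℤ, M ≤ L z := by
    obtain ⟨s, hs⟩ := hfg
    have : ∃ i0 : ℤ, ∀ z ∈ s, z ∈ L i0 := by
      refine Finset.induction_on s ⟨0, by simp⟩ ?_
      rintro a t _ ⟨i0, hi0⟩
      obtain ⟨ia, hia⟩ := hL.exists_mem' hϖ a
      refine ⟨min ia i0, fun z hz => ?_⟩
      rcases Finset.mem_insert.mp hz with rfl | hz
      · exact hL.antitone (min_le_left _ _) hia
      · exact hL.antitone (min_le_right _ _) (hi0 z hz)
    obtain ⟨i0, hi0⟩ := this
    refine ⟨i0, ?_⟩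
    rw [← hs, Submodule.span_le]
    exact fun z hz => hi0 z hz
  obtain ⟨i, hPi, hmax⟩ := Int.exists_greatest_of_bdd ⟨i1, hbdd⟩ hinh
  refine ⟨i, le_antisymm hPi ?_⟩
  have hnot : ¬ M ≤ L (i + 1) := fun h => by
    have := hmax _ h
    omega
  obtain ⟨x, hxM, hx'⟩ := SetLike.not_le_iff_exists.mp hnot
  have hx : x ∈ L i := hPi hxM
  intro y hy
  obtain ⟨lam, hlam1, hlam2, hlam3⟩ :=
    exists_good_functional hϖ (hL.fg i) (hL.spans i) (hL.strict i).le
      (fun z hz => hL.smul_mem_succ i hz) hx hx'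
  obtain ⟨a, haO, hax⟩ := hL.exists_generator hϖ (le_refl i) hx hx' hy lam hlam1 hlam2 hlam3
  rw [← hax]
  exact hstab a haO x hxM

end IsLatticeChain

end Aux

variable [FiniteDimensional F V] [Nontrivial V]
variable (OF : ValuationSubring F) [IsDiscreteValuationRing OF]
  [Finite (IsLocalRing.ResidueField OF)] (ϖF : OF)

/-- `𝔄(L) = 𝔄(L')` iff `L'` is a translate of `L`:
`L' i = L (i + k)` for some fixed `k ∈ ℤ` and all `i`.  In particular a hereditary
order determines the lattice chain defining it up to translation of the indexing. -/
theorem hereditaryOrder_eq_iff_translate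
    (hϖF : Irreducible ϖF)
    (L L' : ℤ → Submodule OF V) (e e' : ℕ)
    (hL : IsLatticeChain OF ϖF L e) (hL' : IsLatticeChain OF ϖF L' e') :
    hereditaryOrder OF L = hereditaryOrder OF L'
      ↔ ∃ k : ℤ, ∀ i, L' i = L (i + k) := by
  constructor
  · intro h
    have hcl : ∀ i, ∃ m, L' i = L m := by
      intro i
      refine hL.eq_of_stable hϖF (hL'.fg i) (hL'.spans i) (fun a ha z hz => ?_)
      rw [h] at ha
      exact ha i z hz
    have hcl' : ∀ m, ∃ i, L m = L' i := by
      intro m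
      refine hL'.eq_of_stable hϖF (hL.fg m) (hL.spans m) (fun a ha z hz => ?_)
      rw [← h] at ha
      exact ha m z hz
    have step_up : ∀ i m : ℤ, L' i = L m → L' (i + 1) = L (m + 1) := by
      intro i m him
      obtain ⟨j, hj⟩ := hcl (i + 1)
      obtain ⟨i2, hi2⟩ := hcl' (m + 1)
      have h1 : L j < L m := by
        rw [← hj, ← him]
        exact hL'.strict i
      have h2 : m < j := hL.lt_iff.mp h1
      have h3 : L' i2 < L' i := by
        rw [← hi2, him]
        exact hL.strict m
      have h4 : i < i2 := hL'.lt_iff.mp h3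
      have h5 : L j ≤ L (m + 1) := hL.antitone (by omega)
      have h6 : L' i2 ≤ L' (i + 1) := hL'.antitone (by omega)
      rw [hj]
      refine le_antisymm h5 ?_
      calc L (m + 1) = L' i2 := hi2
      _ ≤ L' (i + 1) := h6
      _ = L j := hj
    have step_down : ∀ i m : ℤ, L' i = L m → L' (i - 1) = L (m - 1) := by
      intro i m him
      obtain ⟨j, hj⟩ := hcl (i - 1)
      obtain ⟨i2, hi2⟩ := hcl' (m - 1)
      have h1 : L m < L j := by
        rw [← hj, ← him]
        have := hL'.strict (i - 1)
        rw [sub_add_cancel] at this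
        exact this
      have h2 : j < m := hL.lt_iff.mp h1
      have h3 : L' i < L' i2 := by
        rw [← hi2, him]
        have := hL.strict (m - 1)
        rw [sub_add_cancel] at this
        exact this
      have h4 : i2 < i := hL'.lt_iff.mp h3
      have h5 : L (m - 1) ≤ L j := hL.antitone (by omega)
      have h6 : L' (i - 1) ≤ L' i2 := hL'.antitone (by omega)
      rw [hj]
      refine le_antisymm ?_ h5
      calc L j = L' (i - 1) := hj.symm
      _ ≤ L' i2 := h6
      _ = L (m - 1) := hi2.symm
    obtain ⟨k, hk0⟩ := hcl 0
    refine ⟨k, fun i => ?_⟩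
    induction i using Int.induction_on with
    | zero => simpa using hk0
    | succ i ih =>
      have hstep := step_up i (i + k) ih
      rw [hstep]
      congr 1
      ring
    | pred i ih =>
      have hstep := step_down (-i) (-i + k) ih
      rw [hstep]
      congr 1
      ring
  · rintro ⟨k, hk⟩
    ext a
    simp only [mem_hereditaryOrder]
    constructor
    · intro ha i z hz
      rw [hk i] at hz ⊢
      exact ha _ z hz
    · intro ha m z hz
      have hm : L m = L' (m - k) := by rw [hk (m - k), sub_add_cancel]
      rw [hm] at hz ⊢
      exact ha _ z hz


end
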